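/- Consider the one-way epidemic run by n agents under the smoothed scheduler Γ_s with smoothing parameter p ∈ (0,1] and any adaptive adversary: each agent holds a value x ∈ {0,1}, and every interaction (u,v) performs u.x ← max(u.x, v.x). For every constant α > 0 there exists a constant C such that, starting from any configuration in which at least one agent has value 1, after ⌈C·p^{−1}·n·log n⌉ steps all n agents have value 1 with probability 1 − O(n^{−α}). -/

import Mathlib

set_option autoImplicit false

open MeasureTheory ProbabilityTheory
open scoped ENNReal

/-- The randomness of one step of the smoothed scheduler `Γ_s`: whether the interaction is a
uniformly random one, and the uniformly random ordered pair (used only in that case). -/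
structure Step (n : ℕ) where
  isRandom : Bool
  pair : Fin n × Fin n
deriving DecidableEq

instance (n : ℕ) : MeasurableSpace (Step n) := ⊤

/-- The ordered pairs of distinct agents. -/
def distinctPairs (n : ℕ) : Finset (Fin n × Fin n) :=
  Finset.univ.filter fun q => q.1 ≠ q.2

lemma distinctPairs_nonempty {n : ℕ} (hn : 2 ≤ n) : (distinctPairs n).Nonempty := by
  refine ⟨(⟨0, by omega⟩, ⟨1, by omega⟩), ?_⟩
  simp [distinctPairs, Fin.ext_iff]

/-- The distribution of the randomness of one step of `Γ_s` with smoothing parameter `p`. -/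
noncomputable def stepPMF (n : ℕ) (hn : 2 ≤ n) (p : ℝ≥0∞) (hp : p ≤ 1) : PMF (Step n) :=
  (PMF.bernoulli p.toNNReal (by simpa using ENNReal.toNNReal_mono ENNReal.one_ne_top hp)).bind fun c =>
    (PMF.uniformOfFinset (distinctPairs n) (distinctPairs_nonempty hn)).map fun pr => ⟨c, pr⟩

/-- An adaptive adversary: a function from the full history of the execution (which is
determined by the randomness of the past steps) to the next ordered interaction. -/
abbrev Adversary (n : ℕ) := (k : ℕ) → (Fin k → Step n) → Fin n × Fin n

/-- The pair that actually interacts at step `k`. -/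
def chosenPair {n : ℕ} (adv : Adversary n) (s : ℕ → Step n) (k : ℕ) : Fin n × Fin n :=
  if (s k).isRandom then (s k).pair else adv k fun j : Fin k => s j

/-- The one-way epidemic: each agent holds a value in `{0,1}` (`true` = infected) and each
interaction `(u,v)` performs `u.x ← max(u.x, v.x)`. -/
def epidemicExec {n : ℕ} (adv : Adversary n) (x0 : Fin n → Bool) (s : ℕ → Step n) :
    ℕ → Fin n → Bool
  | 0 => x0
  | k + 1 =>
    let C := epidemicExec adv x0 s k
    let pr := chosenPair adv s k
    Function.update C pr.1 (C pr.1 || C pr.2)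

def stepEquiv (n : ℕ) : Step n ≃ Bool × (Fin n × Fin n) :=
  ⟨fun v => (v.isRandom, v.pair), fun x => ⟨x.1, x.2⟩, fun _ => rfl, fun _ => rfl⟩

instance (n : ℕ) : Fintype (Step n) := Fintype.ofEquiv _ (stepEquiv n).symm

namespace Epi

/-! ### counting -/

def cnt {n : ℕ} (C : Fin n → Bool) : ℕ := (Finset.univ.filter fun v => C v = true).card

lemma cnt_le {n : ℕ} (C : Fin n → Bool) : cnt C ≤ n := by
  classical
  simpa [cnt] using (Finset.card_filter_le Finset.univ fun v => C v = true)

lemma cnt_eq_n {n : ℕ} {C : Fin n → Bool} (h : cnt C = n) : ∀ v, C v = true := by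
  classical
  have : (Finset.univ.filter fun v => C v = true) = Finset.univ := by
    apply Finset.eq_univ_of_card
    simpa [cnt] using h
  intro v
  have := Finset.mem_filter.mp (this ▸ Finset.mem_univ v)
  exact this.2

lemma cnt_mono {n : ℕ} {C D : Fin n → Bool} (h : ∀ v, C v = true → D v = true) :
    cnt C ≤ cnt D := by
  classical
  apply Finset.card_le_card
  intro v hv
  simp only [Finset.mem_filter, Finset.mem_univ, true_and] at hv ⊢
  exact h v hv

lemma cnt_pos {n : ℕ} {C : Fin n → Bool} {v : Fin n} (h : C v = true) : 1 ≤ cnt C := by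
  classical
  refine Finset.card_pos.mpr ⟨v, ?_⟩
  simp [h]

lemma cnt_update_succ {n : ℕ} {C : Fin n → Bool} {u : Fin n} (h : C u = false) :
    cnt (Function.update C u true) = cnt C + 1 := by
  classical
  have hmem : u ∉ (Finset.univ.filter fun v => C v = true) := by simp [h]
  have : (Finset.univ.filter fun v => Function.update C u true v = true)
      = insert u (Finset.univ.filter fun v => C v = true) := by
    ext v
    by_cases hv : v = u <;> simp [Function.update_apply, hv]
  rw [cnt, this, Finset.card_insert_of_notMem hmem, cnt]

lemma cnt_filter_false {n : ℕ} (C : Fin n → Bool) :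
    (Finset.univ.filter fun v => C v = false).card = n - cnt C := by
  classical
  have h := Finset.card_filter_add_card_filter_not (s := (Finset.univ : Finset (Fin n)))
    (p := fun v => C v = true)
  have h2 : (Finset.univ.filter fun v => ¬ (C v = true)) =
      (Finset.univ.filter fun v => C v = false) := by
    ext v; simp
  rw [h2] at h
  simp only [Finset.card_univ, Fintype.card_fin] at h
  have hle : cnt C ≤ n := cnt_le C
  unfold cnt at *
  omega

/-! ### exec lemmas -/

variable {n : ℕ} (adv : Adversary n) (x0 : Fin n → Bool)

lemma exec_mono_step (s : ℕ → Step n) (k : ℕ) (v : Fin n)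
    (h : epidemicExec adv x0 s k v = true) : epidemicExec adv x0 s (k+1) v = true := by
  simp only [epidemicExec, Function.update_apply]
  split_ifs with hv
  · rw [hv] at h; simp [h]
  · exact h

lemma exec_mono (s : ℕ → Step n) {k m : ℕ} (hkm : k ≤ m) (v : Fin n)
    (h : epidemicExec adv x0 s k v = true) : epidemicExec adv x0 s m v = true := by
  induction m with
  | zero =>
    have : k = 0 := by omega
    subst this; exact h
  | succ m ih =>
    rcases Nat.lt_or_ge k (m+1) with hlt | hge
    · exact exec_mono_step adv x0 s m v (ih (by omega))
    · have : k = m + 1 := by omega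
      subst this; exact h

lemma exec_congr {s s' : ℕ → Step n} {k : ℕ} (h : ∀ i, i < k → s i = s' i) :
    epidemicExec adv x0 s k = epidemicExec adv x0 s' k := by
  induction k with
  | zero => rfl
  | succ k ih =>
    have hk : epidemicExec adv x0 s k = epidemicExec adv x0 s' k :=
      ih fun i hi => h i (by omega)
    have hcp : chosenPair adv s k = chosenPair adv s' k := by
      unfold chosenPair
      rw [h k (by omega)]
      have harg : (fun j : Fin k => s j) = fun j : Fin k => s' j := by
        funext j
        exact h j (by omega)
      rw [harg]
    simp only [epidemicExec, hk, hcp]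

lemma cnt_exec_pos (s : ℕ → Step n) (k : ℕ) {v : Fin n} (hv : x0 v = true) :
    1 ≤ cnt (epidemicExec adv x0 s k) :=
  cnt_pos (exec_mono adv x0 s (Nat.zero_le k) v hv)

/-! ### analysis: gam, W, harmonic -/

noncomputable def gam (n i : ℕ) : ℝ :=
  if 1 ≤ i ∧ i < n then 1 - ((n:ℝ)-1)/(2*i*((n:ℝ)-i)) else 1

lemma x_bounds {n i : ℕ} (h1 : 1 ≤ i) (h2 : i < n) :
    0 < ((n:ℝ)-1)/(2*i*((n:ℝ)-i)) ∧ ((n:ℝ)-1)/(2*i*((n:ℝ)-i)) ≤ 1/2 := by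
  have hn2 : 2 ≤ n := by omega
  have hij : (n:ℕ) - 1 ≤ i * (n - i) := by
    rcases Nat.exists_eq_add_of_lt h2 with ⟨d, hd⟩
    subst hd
    have : i * (i + d + 1 - i) = i * (d+1) := by congr 1; omega
    rw [this]
    calc i + d + 1 - 1 = d + i := by omega
      _ ≤ i*d + i := Nat.add_le_add_right (Nat.le_mul_of_pos_left d (by omega)) i
      _ = i * (d+1) := by ring
  have hir : ((n:ℝ) - 1) ≤ (i:ℝ) * ((n:ℝ) - i) := by
    have := (Nat.cast_le (α := ℝ)).mpr hij
    push_cast [Nat.cast_sub (by omega : 1 ≤ n), Nat.cast_sub (by omega : i ≤ n)] at this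
    nlinarith [this]
  have hipos : (0:ℝ) < (i:ℝ) := by exact_mod_cast h1
  have hnip : (0:ℝ) < (n:ℝ) - i := by
    have : (i:ℝ) < n := by exact_mod_cast h2
    linarith
  have hden : (0:ℝ) < 2*i*((n:ℝ)-i) := by positivity
  have hnum : (0:ℝ) < (n:ℝ)-1 := by
    have : (2:ℝ) ≤ n := by exact_mod_cast hn2
    linarith
  constructor
  · positivity
  · rw [div_le_div_iff₀ hden (by norm_num)]
    nlinarith

lemma gam_mem {n i : ℕ} : 1/2 ≤ gam n i ∧ gam n i ≤ 1 := by
  unfold gam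
  split_ifs with h
  · obtain ⟨hx0, hx2⟩ := x_bounds h.1 h.2
    constructor <;> linarith
  · norm_num

lemma gam_pos {n i : ℕ} : 0 < gam n i := lt_of_lt_of_le (by norm_num) gam_mem.1

noncomputable def W (n j : ℕ) : ℝ := ∏ i ∈ Finset.Ico j n, (gam n i)⁻¹

lemma one_le_inv_gam {n i : ℕ} : 1 ≤ (gam n i)⁻¹ := by
  exact (one_le_inv₀ gam_pos).mpr gam_mem.2

lemma one_le_W (n j : ℕ) : 1 ≤ W n j := by
  unfold W
  calc (1:ℝ) = ∏ _i ∈ Finset.Ico j n, (1:ℝ) := by simp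
  _ ≤ ∏ i ∈ Finset.Ico j n, (gam n i)⁻¹ :=
    Finset.prod_le_prod (fun i _ => by norm_num) (fun i _ => one_le_inv_gam)

lemma W_pos (n j : ℕ) : 0 < W n j := lt_of_lt_of_le one_pos (one_le_W n j)

lemma W_succ {n j : ℕ} (h : j < n) : W n j = (gam n j)⁻¹ * W n (j+1) := by
  unfold W
  exact Finset.prod_eq_prod_Ico_succ_bot h _

lemma W_succ_le (n j : ℕ) : W n (j+1) ≤ W n j := by
  rcases Nat.lt_or_ge j n with h | h
  · rw [W_succ h]
    nlinarith [W_pos n (j+1), one_le_inv_gam (n := n) (i := j)]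
  · unfold W
    rw [Finset.Ico_eq_empty (by omega), Finset.Ico_eq_empty (by omega)]

lemma W_anti {n : ℕ} {j j' : ℕ} (h : j ≤ j') : W n j' ≤ W n j := by
  induction j' with
  | zero => have : j = 0 := by omega
            subst this; rfl
  | succ m ih =>
    rcases Nat.lt_or_ge j (m+1) with hlt | hge
    · exact le_trans (W_succ_le n m) (ih (by omega))
    · have : j = m + 1 := by omega
      subst this; rfl

lemma harmonic_le : ∀ m : ℕ, 1 ≤ m →
    ∑ i ∈ Finset.Ico 1 (m+1), (1:ℝ)/i ≤ Real.log m + 1 := by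
  intro m
  induction m with
  | zero => omega
  | succ m ih =>
    intro _
    rcases Nat.eq_zero_or_pos m with hm | hm
    · subst hm
      norm_num
    · have hstep : Real.log m + 1/(m+1) ≤ Real.log (m+1) := by
        have hm0 : (0:ℝ) < m := by exact_mod_cast hm
        have hfrac : (0:ℝ) < (m:ℝ)/((m:ℝ)+1) := by positivity
        have := Real.log_le_sub_one_of_pos hfrac
        rw [Real.log_div (by positivity) (by positivity)] at this
        have h1 : (m:ℝ)/((m:ℝ)+1) - 1 = -(1/((m:ℝ)+1)) := by
          field_simp
          ring
        rw [h1] at this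
        have hcast : Real.log ((m:ℝ)+1) = Real.log ((m+1 : ℕ):ℝ) := by push_cast; ring_nf
        linarith
      have hsum : ∑ i ∈ Finset.Ico 1 (m+1+1), (1:ℝ)/i
          = (∑ i ∈ Finset.Ico 1 (m+1), (1:ℝ)/i) + 1/(m+1) := by
        rw [Finset.sum_Ico_succ_top (by omega)]
        push_cast
        ring
      rw [hsum]
      have := ih hm
      push_cast
      push_cast at hstep this
      linarith

lemma sum_inv_reflect {n : ℕ} (hn : 2 ≤ n) :
    ∑ i ∈ Finset.Ico 1 n, (1:ℝ)/((n:ℝ)-i) = ∑ i ∈ Finset.Ico 1 n, (1:ℝ)/i := by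
  refine Finset.sum_nbij' (fun i => n - i) (fun i => n - i) ?_ ?_ ?_ ?_ ?_
  · intro a ha
    simp only [Finset.mem_Ico] at ha ⊢
    omega
  · intro a ha
    simp only [Finset.mem_Ico] at ha ⊢
    omega
  · intro a ha
    simp only [Finset.mem_Ico] at ha
    show n - (n - a) = a
    omega
  · intro a ha
    simp only [Finset.mem_Ico] at ha
    show n - (n - a) = a
    omega
  · intro a ha
    simp only [Finset.mem_Ico] at ha
    congr 1
    rw [Nat.cast_sub (by omega)]

lemma sum_x_le {n : ℕ} (hn : 2 ≤ n) :
    ∑ i ∈ Finset.Ico 1 n, ((n:ℝ)-1)/(2*i*((n:ℝ)-i)) ≤ Real.log n + 1 := by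
  have hident : ∀ i ∈ Finset.Ico 1 n, ((n:ℝ)-1)/(2*i*((n:ℝ)-i))
      = (((n:ℝ)-1)/(2*n)) * ((1:ℝ)/i + (1:ℝ)/((n:ℝ)-i)) := by
    intro i hi
    simp only [Finset.mem_Ico] at hi
    have hipos : (0:ℝ) < (i:ℝ) := by exact_mod_cast hi.1
    have hnip : (0:ℝ) < (n:ℝ) - i := by
      have : (i:ℝ) < n := by exact_mod_cast hi.2
      linarith
    have hnpos : (0:ℝ) < n := by positivity
    field_simp
    ring
  rw [Finset.sum_congr rfl hident, ← Finset.mul_sum, Finset.sum_add_distrib, sum_inv_reflect hn]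
  have hH : ∑ i ∈ Finset.Ico 1 n, (1:ℝ)/i ≤ Real.log n + 1 := by
    have h1 : (1:ℕ) ≤ n - 1 := by omega
    have := harmonic_le (n-1) h1
    have hrw : n - 1 + 1 = n := by omega
    rw [hrw] at this
    refine le_trans this ?_
    have : Real.log ((n:ℕ) - 1 : ℕ) ≤ Real.log n := by
      apply Real.log_le_log (by exact_mod_cast (by omega : (0:ℕ) < n - 1))
      exact_mod_cast Nat.sub_le n 1
    linarith
  have h2n : (2:ℝ) ≤ n := by exact_mod_cast hn
  have hcoef : 0 ≤ ((n:ℝ)-1)/(2*n) := by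
    apply div_nonneg <;> linarith
  have hcoef2 : ((n:ℝ)-1)/(2*n) ≤ 1/2 := by
    have hnpos : (0:ℝ) < n := by linarith
    rw [div_le_div_iff₀ (by positivity) (by norm_num)]
    linarith
  have hHpos : 0 ≤ ∑ i ∈ Finset.Ico 1 n, (1:ℝ)/i := by
    apply Finset.sum_nonneg
    intro i _
    positivity
  calc ((n:ℝ)-1)/(2*n) * (∑ i ∈ Finset.Ico 1 n, (1:ℝ)/i + ∑ i ∈ Finset.Ico 1 n, (1:ℝ)/i)
      ≤ (1/2) * (2 * (Real.log n + 1)) := by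
        have hlog : (0:ℝ) ≤ Real.log n + 1 := by
          have : (0:ℝ) ≤ Real.log n := Real.log_nonneg (by exact_mod_cast hn.trans' (by norm_num))
          linarith
        nlinarith
    _ = Real.log n + 1 := by ring

lemma W1_le {n : ℕ} (hn : 2 ≤ n) : W n 1 ≤ Real.exp (2 * (Real.log n + 1)) := by
  have hfac : ∀ i ∈ Finset.Ico 1 n, (gam n i)⁻¹
      ≤ Real.exp (2 * (((n:ℝ)-1)/(2*i*((n:ℝ)-i)))) := by
    intro i hi
    simp only [Finset.mem_Ico] at hi
    set x := ((n:ℝ)-1)/(2*i*((n:ℝ)-i)) with hx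
    obtain ⟨hx0, hx2⟩ := x_bounds hi.1 hi.2
    have hgam : gam n i = 1 - x := by unfold gam; rw [if_pos ⟨hi.1, hi.2⟩]
    have hexp : 1 + 2*x ≤ Real.exp (2*x) := by
      have := Real.add_one_le_exp (2*x)
      linarith
    have hgpos : 0 < gam n i := gam_pos
    rw [inv_le_iff_one_le_mul₀ hgpos]
    calc (1:ℝ) ≤ (1-x) * (1+2*x) := by nlinarith
      _ ≤ (1-x) * Real.exp (2*x) := by nlinarith [Real.exp_pos (2*x)]
      _ = Real.exp (2*x) * gam n i := by rw [hgam]; ring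
  calc W n 1 ≤ ∏ i ∈ Finset.Ico 1 n, Real.exp (2 * (((n:ℝ)-1)/(2*i*((n:ℝ)-i)))) := by
        refine Finset.prod_le_prod (fun i _ => le_of_lt (inv_pos.mpr gam_pos)) hfac
    _ = Real.exp (∑ i ∈ Finset.Ico 1 n, 2 * (((n:ℝ)-1)/(2*i*((n:ℝ)-i)))) := by
        rw [Real.exp_sum]
    _ ≤ Real.exp (2 * (Real.log n + 1)) := by
        apply Real.exp_le_exp.mpr
        rw [← Finset.mul_sum]
        have := sum_x_le hn
        nlinarith

/-! ### stepPMF computations -/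

lemma card_distinctPairs (n : ℕ) : (distinctPairs n).card = n * n - n := by
  classical
  have hdiag : (Finset.univ.filter fun q : Fin n × Fin n => q.1 = q.2)
      = Finset.univ.map ⟨fun i : Fin n => (i, i), fun a b h => by
          simpa using congrArg Prod.fst h⟩ := by
    ext q
    simp only [Finset.mem_filter, Finset.mem_univ, true_and, Finset.mem_map,
      Function.Embedding.coeFn_mk]
    constructor
    · intro h
      exact ⟨q.1, Prod.ext rfl h⟩
    · rintro ⟨i, hi⟩
      rw [← hi]
      rfl
  have h := Finset.card_filter_add_card_filter_not
    (s := (Finset.univ : Finset (Fin n × Fin n))) (p := fun q => q.1 = q.2)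
  rw [hdiag] at h
  simp only [Finset.card_map, Finset.card_univ, Fintype.card_fin, Fintype.card_prod] at h
  have h2 : (Finset.univ.filter fun q : Fin n × Fin n => ¬ q.1 = q.2) = distinctPairs n := rfl
  rw [h2] at h
  omega

lemma stepPMF_apply {n : ℕ} (hn : 2 ≤ n) (P : ℝ≥0∞) (hP : P ≤ 1) (c : Bool)
    (q : Fin n × Fin n) :
    stepPMF n hn P hP ⟨c, q⟩ =
      (cond c P (1-P)) *
        (if q ∈ distinctPairs n then ((distinctPairs n).card : ℝ≥0∞)⁻¹ else 0) := by
  unfold stepPMF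
  rw [PMF.bind_apply, tsum_bool]
  have hmap : ∀ b : Bool,
      ((PMF.uniformOfFinset (distinctPairs n) (distinctPairs_nonempty hn)).map
        (fun pr => (⟨b, pr⟩ : Step n))) ⟨c, q⟩
      = if b = c then
          (PMF.uniformOfFinset (distinctPairs n) (distinctPairs_nonempty hn)) q else 0 := by
    intro b
    rw [PMF.map_apply]
    by_cases hbc : b = c
    · subst hbc
      rw [if_pos rfl, tsum_eq_single q]
      · simp
      · intro pr hpr
        rw [if_neg]
        simp only [Step.mk.injEq]
        rintro ⟨-, h2⟩
        exact hpr h2.symm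
    · rw [if_neg hbc]
      convert tsum_zero with pr
      rw [if_neg]
      simp only [Step.mk.injEq]
      rintro ⟨h1, -⟩
      exact hbc h1.symm
  rw [hmap true, hmap false]
  cases c <;>
    simp [PMF.bernoulli, PMF.ofFintype_apply, PMF.uniformOfFinset_apply,
      ENNReal.coe_toNNReal (ne_top_of_le_ne_top ENNReal.one_ne_top hP)]

lemma sum_pmr {n : ℕ} (hn : 2 ≤ n) (P : ℝ≥0∞) (hP : P ≤ 1) :
    ∑ v : Step n, (stepPMF n hn P hP v).toReal = 1 := by
  have h := (stepPMF n hn P hP).tsum_coe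
  rw [tsum_fintype] at h
  have h2 := congrArg ENNReal.toReal h
  rw [ENNReal.toReal_sum (fun a _ => PMF.apply_ne_top _ a)] at h2
  simpa using h2

lemma pmr_nonneg {n : ℕ} (hn : 2 ≤ n) (P : ℝ≥0∞) (hP : P ≤ 1) (v : Step n) :
    0 ≤ (stepPMF n hn P hP v).toReal := ENNReal.toReal_nonneg

/-- The set of "good" steps for a configuration. -/
def goodSet {n : ℕ} (C : Fin n → Bool) : Finset (Step n) :=
  Finset.univ.filter fun v : Step n =>
    v.isRandom = true ∧ C v.pair.1 = false ∧ C v.pair.2 = true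

lemma card_goodSet {n : ℕ} (C : Fin n → Bool) :
    (goodSet C).card = (n - cnt C) * cnt C := by
  classical
  have hmap : goodSet C =
      ((Finset.univ.filter fun u : Fin n => C u = false) ×ˢ
        (Finset.univ.filter fun w : Fin n => C w = true)).map
        ⟨fun q => ⟨true, q⟩, fun a b h => by cases h; rfl⟩ := by
    ext v
    simp only [goodSet, Finset.mem_filter, Finset.mem_univ, true_and, Finset.mem_map,
      Finset.mem_product, Function.Embedding.coeFn_mk]
    constructor
    · rintro ⟨h1, h2, h3⟩
      refine ⟨v.pair, ⟨by simpa using h2, by simpa using h3⟩, ?_⟩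
      cases v
      simp_all
      rfl
    · rintro ⟨q, ⟨hq1, hq2⟩, rfl⟩
      exact ⟨rfl, (by simpa using hq1 : C q.1 = false), (by simpa using hq2 : C q.2 = true)⟩
  rw [hmap, Finset.card_map, Finset.card_product, cnt_filter_false]
  rfl

lemma pmr_good {n : ℕ} (hn : 2 ≤ n) (P : ℝ≥0∞) (hP : P ≤ 1) {C : Fin n → Bool} {v : Step n}
    (hv : v ∈ goodSet C) :
    (stepPMF n hn P hP v).toReal = P.toReal / (n * (n-1) : ℕ) := by
  simp only [goodSet, Finset.mem_filter, Finset.mem_univ, true_and] at hv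
  obtain ⟨h1, h2, h3⟩ := hv
  have hv' : v = ⟨true, v.pair⟩ := by cases v; simp_all
  rw [hv', stepPMF_apply hn P hP true v.pair]
  have hmem : v.pair ∈ distinctPairs n := by
    simp only [distinctPairs, Finset.mem_filter, Finset.mem_univ, true_and]
    intro hcontr
    rw [hcontr, h3] at h2
    exact Bool.noConfusion h2
  rw [if_pos hmem, ENNReal.toReal_mul, div_eq_mul_inv]
  congr 1
  rw [ENNReal.toReal_inv]
  congr 1
  rw [card_distinctPairs]
  have hmm : n * n - n = n * (n-1) := by
    rcases n with _ | m
    · simp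
    · rw [Nat.succ_sub_one, Nat.mul_succ]
      omega
  rw [hmm, ENNReal.toReal_natCast]

lemma sum_pmr_good {n : ℕ} (hn : 2 ≤ n) (P : ℝ≥0∞) (hP : P ≤ 1) (C : Fin n → Bool) :
    ∑ v ∈ goodSet C, (stepPMF n hn P hP v).toReal
      = ((n - cnt C) * cnt C : ℕ) * (P.toReal / (n * (n-1) : ℕ)) := by
  rw [Finset.sum_congr rfl (fun v hv => pmr_good hn P hP hv), Finset.sum_const,
    card_goodSet, nsmul_eq_mul]

/-! ### extension of finite histories -/

def ext {n : ℕ} (hn : 2 ≤ n) {k : ℕ} (h : Fin k → Step n) : ℕ → Step n :=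
  fun j => if hj : j < k then h ⟨j, hj⟩ else ⟨false, (⟨0, by omega⟩, ⟨0, by omega⟩)⟩

lemma ext_lt {n : ℕ} (hn : 2 ≤ n) {k : ℕ} (h : Fin k → Step n) {i : ℕ} (hi : i < k) :
    ext hn h i = h ⟨i, hi⟩ := dif_pos hi

lemma ext_snoc_lt {n : ℕ} (hn : 2 ≤ n) {k : ℕ} (h : Fin k → Step n) (v : Step n) {i : ℕ}
    (hi : i < k) : ext hn (Fin.snoc h v) i = ext hn h i := by
  rw [ext_lt hn _ (by omega : i < k + 1), ext_lt hn h hi]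
  have hcast : (⟨i, by omega⟩ : Fin (k+1)) = Fin.castSucc ⟨i, hi⟩ := rfl
  rw [hcast, Fin.snoc_castSucc]

lemma ext_snoc_last {n : ℕ} (hn : 2 ≤ n) {k : ℕ} (h : Fin k → Step n) (v : Step n) :
    ext hn (Fin.snoc h v) k = v := by
  rw [ext_lt hn _ (by omega : k < k + 1)]
  have hcast : (⟨k, by omega⟩ : Fin (k+1)) = Fin.last k := rfl
  rw [hcast, Fin.snoc_last]

/-! ### key one-step inequality -/

lemma key_step {n : ℕ} (hn : 2 ≤ n) (P : ℝ≥0∞) (hP : P ≤ 1)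
    {C : Fin n → Bool} (hj1 : 1 ≤ cnt C) (hj2 : cnt C < n)
    (g : Step n → ℕ) (hg1 : ∀ v, cnt C ≤ g v) (hg2 : ∀ v ∈ goodSet C, cnt C + 1 ≤ g v) :
    ∑ v : Step n, (stepPMF n hn P hP v).toReal * W n (g v)
      ≤ (1 - P.toReal/(2*n)) * W n (cnt C) := by
  classical
  set j := cnt C with hj
  set p := P.toReal with hp
  have hp0 : 0 ≤ p := ENNReal.toReal_nonneg
  have hsplit := Finset.sum_add_sum_compl (goodSet C)
    (fun v => (stepPMF n hn P hP v).toReal * W n (g v))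
  have hgood_le : ∑ v ∈ goodSet C, (stepPMF n hn P hP v).toReal * W n (g v)
      ≤ (∑ v ∈ goodSet C, (stepPMF n hn P hP v).toReal) * W n (j+1) := by
    rw [Finset.sum_mul]
    apply Finset.sum_le_sum
    intro v hv
    have := W_anti (n := n) (hg2 v hv)
    nlinarith [pmr_nonneg hn P hP v, W_pos n (g v)]
  have hbad_le : ∑ v ∈ (goodSet C)ᶜ, (stepPMF n hn P hP v).toReal * W n (g v)
      ≤ (∑ v ∈ (goodSet C)ᶜ, (stepPMF n hn P hP v).toReal) * W n j := by
    rw [Finset.sum_mul]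
    apply Finset.sum_le_sum
    intro v hv
    have := W_anti (n := n) (hg1 v)
    nlinarith [pmr_nonneg hn P hP v, W_pos n (g v)]
  set Pg := ∑ v ∈ goodSet C, (stepPMF n hn P hP v).toReal with hPg
  have hPb : ∑ v ∈ (goodSet C)ᶜ, (stepPMF n hn P hP v).toReal = 1 - Pg := by
    have htot := sum_pmr hn P hP
    have := Finset.sum_add_sum_compl (goodSet C) (fun v => (stepPMF n hn P hP v).toReal)
    rw [htot] at this
    linarith
  have hPgval : Pg = ((n - j) * j : ℕ) * (p / (n * (n-1) : ℕ)) := sum_pmr_good hn P hP C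
  have hWj1 : W n (j+1) = gam n j * W n j := by
    rw [W_succ hj2]
    field_simp [ne_of_gt (gam_pos (n := n) (i := j))]
  have hgamval : gam n j = 1 - ((n:ℝ)-1)/(2*j*((n:ℝ)-j)) := by
    unfold gam; rw [if_pos ⟨hj1, hj2⟩]
  have hjr : (0:ℝ) < (j:ℝ) := by exact_mod_cast hj1
  have hnj : (0:ℝ) < (n:ℝ) - j := by
    have : (j:ℝ) < n := by exact_mod_cast hj2
    linarith
  have hnr : (0:ℝ) < (n:ℝ) := by positivity
  have hn1 : (0:ℝ) < (n:ℝ) - 1 := by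
    have : (2:ℝ) ≤ (n:ℝ) := by exact_mod_cast hn
    linarith
  have hcast1 : (((n - j) * j : ℕ) : ℝ) = ((n:ℝ) - j) * j := by
    push_cast [Nat.cast_sub (le_of_lt hj2)]
    ring
  have hcast2 : ((n * (n-1) : ℕ) : ℝ) = (n:ℝ) * ((n:ℝ) - 1) := by
    push_cast [Nat.cast_sub (by omega : 1 ≤ n)]
    ring
  have hkey : Pg * (((n:ℝ)-1)/(2*j*((n:ℝ)-j))) = p/(2*n) := by
    rw [hPgval, hcast1, hcast2]
    field_simp
  rw [← hsplit]
  calc (∑ v ∈ goodSet C, (stepPMF n hn P hP v).toReal * W n (g v))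
        + ∑ v ∈ (goodSet C)ᶜ, (stepPMF n hn P hP v).toReal * W n (g v)
      ≤ Pg * W n (j+1) + (1 - Pg) * W n j := by
        rw [← hPb]
        exact add_le_add hgood_le hbad_le
    _ = (1 - Pg * (((n:ℝ)-1)/(2*j*((n:ℝ)-j)))) * W n j := by
        rw [hWj1, hgamval]; ring
    _ = (1 - p/(2*n)) * W n j := by rw [hkey]

/-! ### the exponential potential and its supermartingale property -/

noncomputable def ExF {n : ℕ} (hn : 2 ≤ n) (P : ℝ≥0∞) (hP : P ≤ 1)
    (adv : Adversary n) (x0 : Fin n → Bool) (k : ℕ) : ℝ :=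
  ∑ h : Fin k → Step n,
    (∏ i, (stepPMF n hn P hP (h i)).toReal) *
      ((1 - P.toReal/(2*n))⁻¹ ^
          (∑ t ∈ Finset.range k,
            if cnt (epidemicExec adv x0 (ext hn h) t) < n then 1 else 0) *
        W n (cnt (epidemicExec adv x0 (ext hn h) k)))

lemma beta_pos {n : ℕ} (hn : 2 ≤ n) {P : ℝ≥0∞} (hP : P ≤ 1) :
    0 < 1 - P.toReal/(2*(n:ℝ)) := by
  have h1 : P.toReal ≤ 1 := by
    have := ENNReal.toReal_mono (by simp) hP
    simpa using this
  have h0 : 0 ≤ P.toReal := ENNReal.toReal_nonneg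
  have hn4 : (4:ℝ) ≤ 2*(n:ℝ) := by
    have : (2:ℝ) ≤ (n:ℝ) := by exact_mod_cast hn
    linarith
  have : P.toReal/(2*(n:ℝ)) ≤ 1/4 := by
    rw [div_le_div_iff₀ (by linarith) (by norm_num)]
    linarith
  linarith

lemma ExF_succ_le {n : ℕ} (hn : 2 ≤ n) (P : ℝ≥0∞) (hP : P ≤ 1)
    (adv : Adversary n) (x0 : Fin n → Bool) (hx0 : ∃ v, x0 v = true) (k : ℕ) :
    ExF hn P hP adv x0 (k+1) ≤ ExF hn P hP adv x0 k := by
  classical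
  obtain ⟨v0, hv0⟩ := hx0
  set β := 1 - P.toReal/(2*(n:ℝ)) with hβdef
  have hβpos : 0 < β := beta_pos hn hP
  have hβle1 : β ≤ 1 := by
    have h0 : 0 ≤ P.toReal := ENNReal.toReal_nonneg
    have hn0 : (0:ℝ) < 2*(n:ℝ) := by
      have : (2:ℝ) ≤ (n:ℝ) := by exact_mod_cast hn
      linarith
    have : 0 ≤ P.toReal/(2*(n:ℝ)) := by positivity
    simp only [hβdef]
    linarith
  have hβinv : 0 < β⁻¹ := inv_pos.mpr hβpos
  have hre : ExF hn P hP adv x0 (k+1) = ∑ h : Fin k → Step n, ∑ v : Step n,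
      (∏ i, (stepPMF n hn P hP ((Fin.snoc h v : Fin (k+1) → Step n) i)).toReal) *
        ((1 - P.toReal/(2*(n:ℝ)))⁻¹ ^
            (∑ t ∈ Finset.range (k+1),
              if cnt (epidemicExec adv x0 (ext hn (Fin.snoc h v)) t) < n then 1 else 0) *
          W n (cnt (epidemicExec adv x0 (ext hn (Fin.snoc h v)) (k+1)))) := by
    unfold ExF
    rw [← Equiv.sum_comp (Fin.snocEquiv (fun _ => Step n))
      (fun h : Fin (k+1) → Step n =>
        (∏ i, (stepPMF n hn P hP (h i)).toReal) *
          ((1 - P.toReal/(2*(n:ℝ)))⁻¹ ^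
              (∑ t ∈ Finset.range (k+1),
                if cnt (epidemicExec adv x0 (ext hn h) t) < n then 1 else 0) *
            W n (cnt (epidemicExec adv x0 (ext hn h) (k+1))))),
      Fintype.sum_prod_type, Finset.sum_comm]
    rfl
  rw [hre]
  unfold ExF
  apply Finset.sum_le_sum
  intro h _
  -- abbreviations for this history
  set C := epidemicExec adv x0 (ext hn h) k with hC
  set j := cnt C with hj
  set A := ∑ t ∈ Finset.range k,
      if cnt (epidemicExec adv x0 (ext hn h) t) < n then 1 else 0 with hA
  set Pi := ∏ i, (stepPMF n hn P hP (h i)).toReal with hPi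
  have hPi0 : 0 ≤ Pi := Finset.prod_nonneg fun i _ => ENNReal.toReal_nonneg
  -- facts about the extension by one step
  have hpref : ∀ (v : Step n) (t : ℕ), t ≤ k →
      epidemicExec adv x0 (ext hn (Fin.snoc h v)) t = epidemicExec adv x0 (ext hn h) t :=
    fun v t ht => exec_congr adv x0 fun i hi => ext_snoc_lt hn h v (lt_of_lt_of_le hi ht)
  have hAeq : ∀ v : Step n,
      (∑ t ∈ Finset.range (k+1),
        if cnt (epidemicExec adv x0 (ext hn (Fin.snoc h v)) t) < n then 1 else 0)
      = A + (if j < n then 1 else 0) := by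
    intro v
    rw [Finset.sum_range_succ]
    congr 1
    · apply Finset.sum_congr rfl
      intro t ht
      rw [hpref v t (le_of_lt (Finset.mem_range.mp ht))]
    · rw [hpref v k le_rfl]
  have hprod : ∀ v : Step n,
      (∏ i, (stepPMF n hn P hP ((Fin.snoc h v : Fin (k+1) → Step n) i)).toReal) = Pi * (stepPMF n hn P hP v).toReal := by
    intro v
    rw [Fin.prod_univ_castSucc]
    simp only [Fin.snoc_castSucc, Fin.snoc_last]
    rfl
  -- the new count
  set g : Step n → ℕ := fun v => cnt (epidemicExec adv x0 (ext hn (Fin.snoc h v)) (k+1)) with hg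
  have hg1 : ∀ v, j ≤ g v := by
    intro v
    have hmono : cnt (epidemicExec adv x0 (ext hn (Fin.snoc h v)) k)
        ≤ cnt (epidemicExec adv x0 (ext hn (Fin.snoc h v)) (k+1)) :=
      cnt_mono fun w hw => exec_mono_step adv x0 _ k w hw
    rw [hpref v k le_rfl] at hmono
    exact hmono
  have hgn : ∀ v, g v ≤ n := fun v => cnt_le _
  have hg2 : ∀ v ∈ goodSet C, j + 1 ≤ g v := by
    intro v hv
    simp only [goodSet, Finset.mem_filter, Finset.mem_univ, true_and] at hv
    obtain ⟨h1, h2, h3⟩ := hv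
    have hstep : epidemicExec adv x0 (ext hn (Fin.snoc h v)) (k+1)
        = Function.update (epidemicExec adv x0 (ext hn (Fin.snoc h v)) k)
            (chosenPair adv (ext hn (Fin.snoc h v)) k).1
            ((epidemicExec adv x0 (ext hn (Fin.snoc h v)) k)
                (chosenPair adv (ext hn (Fin.snoc h v)) k).1 ||
              (epidemicExec adv x0 (ext hn (Fin.snoc h v)) k)
                (chosenPair adv (ext hn (Fin.snoc h v)) k).2) := rfl
    have hcp : chosenPair adv (ext hn (Fin.snoc h v)) k = v.pair := by
      unfold chosenPair
      rw [ext_snoc_last hn h v, h1]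
      simp
    have : g v = j + 1 := by
      rw [hg]
      simp only [hstep, hcp, hpref v k le_rfl, ← hC]
      rw [h2, h3]
      simp only [Bool.false_or]
      exact cnt_update_succ h2
    omega
  have hj1 : 1 ≤ j := cnt_exec_pos adv x0 _ k hv0
  -- rewrite the inner sum
  have hrw : ∀ v : Step n,
      (∏ i, (stepPMF n hn P hP ((Fin.snoc h v : Fin (k+1) → Step n) i)).toReal) *
        (β⁻¹ ^ (∑ t ∈ Finset.range (k+1),
            if cnt (epidemicExec adv x0 (ext hn (Fin.snoc h v)) t) < n then 1 else 0) *
          W n (g v))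
      = Pi * β⁻¹ ^ A *
          ((stepPMF n hn P hP v).toReal * (β⁻¹ ^ (if j < n then 1 else 0) * W n (g v))) := by
    intro v
    rw [hprod v, hAeq v, pow_add]
    ring
  have hinner : ∑ v : Step n,
      (stepPMF n hn P hP v).toReal * (β⁻¹ ^ (if j < n then 1 else 0) * W n (g v)) ≤ W n j := by
    by_cases hjn : j < n
    · rw [if_pos hjn]
      have hks := key_step hn P hP hj1 hjn g hg1 hg2
      calc ∑ v : Step n, (stepPMF n hn P hP v).toReal * (β⁻¹ ^ 1 * W n (g v))
          = β⁻¹ * ∑ v : Step n, (stepPMF n hn P hP v).toReal * W n (g v) := by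
            rw [Finset.mul_sum]
            apply Finset.sum_congr rfl
            intro v _
            ring
        _ ≤ β⁻¹ * (β * W n j) := by
            apply mul_le_mul_of_nonneg_left _ (le_of_lt hβinv)
            exact hks
        _ = W n j := by
            field_simp
    · rw [if_neg hjn]
      have hjeq : j = n := le_antisymm (cnt_le C) (le_of_not_gt hjn)
      have hgv : ∀ v : Step n, g v = j := fun v => le_antisymm (hjeq ▸ hgn v) (hg1 v)
      calc ∑ v : Step n, (stepPMF n hn P hP v).toReal * (β⁻¹ ^ 0 * W n (g v))
          = ∑ v : Step n, (stepPMF n hn P hP v).toReal * W n j := by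
            apply Finset.sum_congr rfl
            intro v _
            rw [hgv v, pow_zero, one_mul]
        _ = W n j := by
            rw [← Finset.sum_mul, sum_pmr hn P hP, one_mul]
        _ ≤ W n j := le_rfl
  -- put it together
  calc ∑ v : Step n,
        (∏ i, (stepPMF n hn P hP ((Fin.snoc h v : Fin (k+1) → Step n) i)).toReal) *
          (β⁻¹ ^ (∑ t ∈ Finset.range (k+1),
              if cnt (epidemicExec adv x0 (ext hn (Fin.snoc h v)) t) < n then 1 else 0) *
            W n (g v))
      = Pi * β⁻¹ ^ A *
          ∑ v : Step n, (stepPMF n hn P hP v).toReal *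
            (β⁻¹ ^ (if j < n then 1 else 0) * W n (g v)) := by
        rw [Finset.mul_sum]
        exact Finset.sum_congr rfl fun v _ => hrw v
    _ ≤ Pi * β⁻¹ ^ A * W n j := by
        apply mul_le_mul_of_nonneg_left hinner
        exact mul_nonneg hPi0 (le_of_lt (pow_pos hβinv A))
    _ = Pi * (β⁻¹ ^ A * W n j) := by ring

lemma ExF_zero_le {n : ℕ} (hn : 2 ≤ n) (P : ℝ≥0∞) (hP : P ≤ 1)
    (adv : Adversary n) (x0 : Fin n → Bool) (hx0 : ∃ v, x0 v = true) :
    ExF hn P hP adv x0 0 ≤ W n 1 := by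
  obtain ⟨v0, hv0⟩ := hx0
  unfold ExF
  rw [Finset.univ_unique, Finset.sum_singleton]
  simp only [Finset.univ_eq_empty, Finset.prod_empty, Finset.range_zero, Finset.sum_empty,
    pow_zero, one_mul]
  exact W_anti (cnt_pos (v := v0) (by exact hv0))

lemma ExF_le {n : ℕ} (hn : 2 ≤ n) (P : ℝ≥0∞) (hP : P ≤ 1)
    (adv : Adversary n) (x0 : Fin n → Bool) (hx0 : ∃ v, x0 v = true) (k : ℕ) :
    ExF hn P hP adv x0 k ≤ W n 1 := by
  induction k with
  | zero => exact ExF_zero_le hn P hP adv x0 hx0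
  | succ k ih => exact le_trans (ExF_succ_le hn P hP adv x0 hx0 k) ih

/-! ### cylinder probabilities -/

lemma step_measurableSet {n : ℕ} (s : Set (Step n)) : MeasurableSet s := trivial

lemma cyl_measure {n : ℕ} (hn : 2 ≤ n) (P : ℝ≥0∞) (hP : P ≤ 1)
    {Ω : Type} [MeasurableSpace Ω] (μ : Measure Ω) [IsProbabilityMeasure μ]
    (steps : ℕ → Ω → Step n) (hmeas : ∀ j, Measurable (steps j))
    (hind : iIndepFun steps μ)
    (hmap : ∀ j, μ.map (steps j) = (stepPMF n hn P hP).toMeasure)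
    (k : ℕ) (h : Fin k → Step n) :
    μ {ω | ∀ i : Fin k, steps i ω = h i} = ∏ i : Fin k, stepPMF n hn P hP (h i) := by
  classical
  have hsingle : ∀ (j : ℕ) (x : Step n), μ (steps j ⁻¹' {x}) = stepPMF n hn P hP x := by
    intro j x
    rw [← Measure.map_apply (hmeas j) (step_measurableSet _), hmap j,
      PMF.toMeasure_apply_singleton _ x (step_measurableSet _)]
  set sets : ℕ → Set (Step n) :=
    fun i => if hi : i < k then ({h ⟨i, hi⟩} : Set (Step n)) else Set.univ with hsets
  have key := hind.measure_inter_preimage_eq_mul (Finset.range k) (sets := sets)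
    (fun i _ => step_measurableSet _)
  have hSet : (⋂ i ∈ Finset.range k, steps i ⁻¹' sets i)
      = {ω | ∀ i : Fin k, steps i ω = h i} := by
    ext ω
    simp only [Set.mem_iInter, Finset.mem_range, Set.mem_preimage, Set.mem_setOf_eq]
    constructor
    · intro H i
      have := H i.val i.isLt
      rw [hsets] at this
      simp only [dif_pos i.isLt] at this
      simpa using this
    · intro H i hi
      rw [hsets]
      simp only [dif_pos hi]
      simp only [Set.mem_singleton_iff]
      exact H ⟨i, hi⟩
  rw [hSet] at key
  rw [key]
  have hterm : ∀ i ∈ Finset.range k, μ (steps i ⁻¹' sets i)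
      = (fun i : ℕ => if hi : i < k then (stepPMF n hn P hP (h ⟨i, hi⟩) : ℝ≥0∞) else 1) i := by
    intro i hi
    have hik := Finset.mem_range.mp hi
    rw [hsets]
    simp only [dif_pos hik]
    exact hsingle i (h ⟨i, hik⟩)
  rw [Finset.prod_congr rfl hterm,
    ← Fin.prod_univ_eq_prod_range
      (fun i : ℕ => if hi : i < k then (stepPMF n hn P hP (h ⟨i, hi⟩) : ℝ≥0∞) else 1) k]
  apply Finset.prod_congr rfl
  intro i _
  simp only [dif_pos i.isLt]

/-! ### the main bound -/

lemma main_bound {n : ℕ} (hn : 2 ≤ n) (P : ℝ≥0∞) (hP : P ≤ 1)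
    {Ω : Type} [MeasurableSpace Ω] (μ : Measure Ω) [IsProbabilityMeasure μ]
    (steps : ℕ → Ω → Step n) (hmeas : ∀ j, Measurable (steps j))
    (hind : iIndepFun steps μ)
    (hmap : ∀ j, μ.map (steps j) = (stepPMF n hn P hP).toMeasure)
    (adv : Adversary n) (x0 : Fin n → Bool) (hx0 : ∃ v, x0 v = true) (T : ℕ) :
    μ {ω | ¬ ∀ v, epidemicExec adv x0 (fun j => steps j ω) T v = true}
      ≤ ENNReal.ofReal ((1 - P.toReal/(2*(n:ℝ)))^T * W n 1) := by
  classical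
  set β := 1 - P.toReal/(2*(n:ℝ)) with hβdef
  have hβpos : 0 < β := beta_pos hn hP
  set badF : Finset (Fin T → Step n) :=
    Finset.univ.filter (fun h => ¬ ∀ v, epidemicExec adv x0 (ext hn h) T v = true) with hbadF
  have hexecω : ∀ ω : Ω, epidemicExec adv x0 (fun j => steps j ω) T
      = epidemicExec adv x0 (ext hn (fun i : Fin T => steps i ω)) T :=
    fun ω => exec_congr adv x0 fun i hi =>
      (ext_lt hn (fun i : Fin T => steps i ω) hi).symm
  have hpart : {ω | ¬ ∀ v, epidemicExec adv x0 (fun j => steps j ω) T v = true}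
      = ⋃ h ∈ badF, {ω | ∀ i : Fin T, steps i ω = h i} := by
    ext ω
    simp only [Set.mem_setOf_eq, Set.mem_iUnion]
    constructor
    · intro hbad
      refine ⟨fun i => steps i ω, ?_, fun i => rfl⟩
      rw [hbadF, Finset.mem_filter]
      refine ⟨Finset.mem_univ _, ?_⟩
      rw [← hexecω ω]
      exact hbad
    · rintro ⟨h, hmem, hω⟩
      have hfun : (fun i : Fin T => steps i ω) = h := funext hω
      rw [hbadF, Finset.mem_filter] at hmem
      rw [hexecω ω, hfun]
      exact hmem.2
  have hcylmeas : ∀ h : Fin T → Step n,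
      MeasurableSet {ω | ∀ i : Fin T, steps i ω = h i} := by
    intro h
    have : {ω | ∀ i : Fin T, steps i ω = h i} = ⋂ i : Fin T, steps i ⁻¹' {h i} := by
      ext ω
      simp [Set.mem_iInter]
    rw [this]
    exact MeasurableSet.iInter fun i => (hmeas i) (step_measurableSet _)
  have hdisj : (badF : Set (Fin T → Step n)).PairwiseDisjoint
      (fun h => {ω | ∀ i : Fin T, steps i ω = h i}) := by
    intro a _ b _ hab
    rw [Function.onFun, Set.disjoint_left]
    intro ω ha hb
    exact hab (funext fun i => (ha i).symm.trans (hb i))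
  rw [hpart, measure_biUnion_finset hdisj fun h _ => hcylmeas h]
  -- rewrite each cylinder measure
  have hcyl := cyl_measure hn P hP μ steps hmeas hind hmap T
  rw [Finset.sum_congr rfl fun h _ => hcyl h]
  -- convert to a real sum
  have hne : ∀ h : Fin T → Step n, (∏ i : Fin T, (stepPMF n hn P hP (h i) : ℝ≥0∞)) ≠ ⊤ :=
    fun h => ENNReal.prod_ne_top fun i _ => PMF.apply_ne_top _ _
  have hsum_ne : (∑ h ∈ badF, ∏ i : Fin T, (stepPMF n hn P hP (h i) : ℝ≥0∞)) ≠ ⊤ :=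
    (ENNReal.sum_lt_top.mpr fun h _ => (hne h).lt_top).ne
  rw [← ENNReal.ofReal_toReal hsum_ne, ENNReal.toReal_sum (fun h _ => hne h)]
  apply ENNReal.ofReal_le_ofReal
  -- now a real inequality
  set S := ∑ h ∈ badF, (∏ i : Fin T, (stepPMF n hn P hP (h i) : ℝ≥0∞)).toReal with hS
  have hSval : S = ∑ h ∈ badF, ∏ i : Fin T, ((stepPMF n hn P hP (h i)) : ℝ≥0∞).toReal := by
    rw [hS]
    exact Finset.sum_congr rfl fun h _ => ENNReal.toReal_prod _ _
  have hprobnn : ∀ h : Fin T → Step n,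
      0 ≤ ∏ i : Fin T, ((stepPMF n hn P hP (h i)) : ℝ≥0∞).toReal :=
    fun h => Finset.prod_nonneg fun i _ => ENNReal.toReal_nonneg
  -- key: compare with ExF
  have hpot : ∀ h ∈ badF, β⁻¹ ^ T * W n (n-1) ≤
      β⁻¹ ^ (∑ t ∈ Finset.range T,
          if cnt (epidemicExec adv x0 (ext hn h) t) < n then 1 else 0) *
        W n (cnt (epidemicExec adv x0 (ext hn h) T)) := by
    intro h hm
    rw [hbadF, Finset.mem_filter] at hm
    have hTlt : cnt (epidemicExec adv x0 (ext hn h) T) < n := by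
      rcases Nat.lt_or_ge (cnt (epidemicExec adv x0 (ext hn h) T)) n with hl | hg
      · exact hl
      · exfalso
        exact hm.2 fun v => cnt_eq_n (le_antisymm (cnt_le _) hg) v
    have hAT : (∑ t ∈ Finset.range T,
        if cnt (epidemicExec adv x0 (ext hn h) t) < n then 1 else 0) = T := by
      have hone : ∀ t ∈ Finset.range T,
          (if cnt (epidemicExec adv x0 (ext hn h) t) < n then 1 else 0) = 1 := by
        intro t ht
        apply if_pos
        have hmono : cnt (epidemicExec adv x0 (ext hn h) t)
            ≤ cnt (epidemicExec adv x0 (ext hn h) T) :=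
          cnt_mono fun w hw =>
            exec_mono adv x0 _ (le_of_lt (Finset.mem_range.mp ht)) w hw
        omega
      rw [Finset.sum_congr rfl hone, Finset.sum_const, Finset.card_range, smul_eq_mul, mul_one]
    rw [hAT]
    have hWle : W n (n-1) ≤ W n (cnt (epidemicExec adv x0 (ext hn h) T)) :=
      W_anti (by omega)
    exact mul_le_mul_of_nonneg_left hWle (le_of_lt (pow_pos (inv_pos.mpr hβpos) T))
  have hkey : S * (β⁻¹ ^ T * W n (n-1)) ≤ ExF hn P hP adv x0 T := by
    calc S * (β⁻¹ ^ T * W n (n-1))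
        = ∑ h ∈ badF, (∏ i : Fin T, ((stepPMF n hn P hP (h i)) : ℝ≥0∞).toReal) *
            (β⁻¹ ^ T * W n (n-1)) := by
          rw [hSval, Finset.sum_mul]
      _ ≤ ∑ h ∈ badF, (∏ i : Fin T, ((stepPMF n hn P hP (h i)) : ℝ≥0∞).toReal) *
            (β⁻¹ ^ (∑ t ∈ Finset.range T,
                if cnt (epidemicExec adv x0 (ext hn h) t) < n then 1 else 0) *
              W n (cnt (epidemicExec adv x0 (ext hn h) T))) := by
          apply Finset.sum_le_sum
          intro h hm
          exact mul_le_mul_of_nonneg_left (hpot h hm) (hprobnn h)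
      _ ≤ ∑ h : Fin T → Step n, (∏ i : Fin T, ((stepPMF n hn P hP (h i)) : ℝ≥0∞).toReal) *
            (β⁻¹ ^ (∑ t ∈ Finset.range T,
                if cnt (epidemicExec adv x0 (ext hn h) t) < n then 1 else 0) *
              W n (cnt (epidemicExec adv x0 (ext hn h) T))) := by
          apply Finset.sum_le_sum_of_subset_of_nonneg (Finset.subset_univ badF)
          intro h _ _
          apply mul_nonneg (hprobnn h)
          exact mul_nonneg (le_of_lt (pow_pos (inv_pos.mpr hβpos) _)) (le_of_lt (W_pos _ _))
      _ = ExF hn P hP adv x0 T := by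
          unfold ExF
          rfl
  have hExLe := ExF_le hn P hP adv x0 hx0 T
  have h1 : S * ((β ^ T)⁻¹ * W n (n-1)) ≤ W n 1 := by
    rw [← inv_pow]
    exact hkey.trans hExLe
  have hbT : 0 < β ^ T := pow_pos hβpos T
  have hw1 : 1 ≤ W n (n-1) := one_le_W n (n-1)
  have hSnn : 0 ≤ S := by
    rw [hSval]
    exact Finset.sum_nonneg fun h _ => hprobnn h
  have h2 : S * (β ^ T)⁻¹ ≤ W n 1 := by
    nlinarith [mul_nonneg hSnn (inv_nonneg.mpr hbT.le)]
  calc S = S * (β ^ T)⁻¹ * β ^ T := by field_simp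
    _ ≤ W n 1 * β ^ T := mul_le_mul_of_nonneg_right h2 hbT.le
    _ = β ^ T * W n 1 := by ring

end Epi

/-- For the one-way epidemic under `Γ_s` with smoothing parameter `p` and
any adaptive adversary: for every `α > 0` there is a constant `C` such that, for all large
enough `n`, starting from any configuration with at least one infected agent, after
`⌈C·p⁻¹·n·log n⌉` steps all agents are infected with probability `1 − O(n^{−α})`. -/
theorem one_way_epidemic_smoothed :
    ∀ α : ℝ, 0 < α →
    ∃ (C Cf : ℝ) (n₀ : ℕ), 0 < C ∧ 0 < Cf ∧
      ∀ (n : ℕ), n₀ ≤ n → ∀ (hn : 2 ≤ n) (p : ℝ) (hp0 : 0 < p) (hp1 : p ≤ 1),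
      ∀ (Ω : Type) [MeasurableSpace Ω] (μ : Measure Ω) [IsProbabilityMeasure μ],
      ∀ (steps : ℕ → Ω → Step n),
        (∀ j, Measurable (steps j)) →
        iIndepFun steps μ →
        (∀ j, μ.map (steps j) =
          (stepPMF n hn (ENNReal.ofReal p) (ENNReal.ofReal_le_one.mpr hp1)).toMeasure) →
      ∀ (adv : Adversary n), (∀ j h, (adv j h).1 ≠ (adv j h).2) →
      ∀ (x0 : Fin n → Bool), (∃ v, x0 v = true) →
        μ {ω | ¬ ∀ v, epidemicExec adv x0 (fun j => steps j ω)
              ⌈C * p⁻¹ * n * Real.log n⌉₊ v = true} ≤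
          ENNReal.ofReal (Cf * (n : ℝ) ^ (-α)) := by
  intro α hα
  refine ⟨2*α+6, Real.exp 2, 2, by linarith, Real.exp_pos 2, ?_⟩
  intro n hn0 hn p hp0 hp1 Ω _ μ _ steps hmeas hind hmap adv _hadv x0 hx0
  set T := ⌈(2*α+6) * p⁻¹ * (n:ℝ) * Real.log n⌉₊ with hT
  have hP1 : ENNReal.ofReal p ≤ 1 := ENNReal.ofReal_le_one.mpr hp1
  refine le_trans
    (Epi.main_bound hn (ENNReal.ofReal p) hP1 μ steps hmeas hind hmap adv x0 hx0 T) ?_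
  apply ENNReal.ofReal_le_ofReal
  have hptr : (ENNReal.ofReal p).toReal = p := ENNReal.toReal_ofReal hp0.le
  have hn2 : (2:ℝ) ≤ n := by exact_mod_cast hn
  have hnpos : (0:ℝ) < n := by linarith
  set δ := p/(2*(n:ℝ)) with hδ
  have hδpos : 0 < δ := div_pos hp0 (by linarith)
  have hβ : 1 - (ENNReal.ofReal p).toReal/(2*(n:ℝ)) = 1 - δ := by rw [hptr]
  rw [hβ]
  have hβpos : 0 < 1 - δ := by
    have : δ ≤ 1/4 := by
      rw [hδ, div_le_div_iff₀ (by linarith) (by norm_num)]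
      linarith
    linarith
  have hlogn : 0 ≤ Real.log n := Real.log_nonneg (by linarith)
  have hTge : (α+3) * Real.log n ≤ δ * T := by
    have hceil : (2*α+6) * p⁻¹ * (n:ℝ) * Real.log n ≤ (T:ℝ) := Nat.le_ceil _
    have hid : δ * ((2*α+6) * p⁻¹ * (n:ℝ) * Real.log n) = (α+3) * Real.log n := by
      rw [hδ]
      field_simp
      ring
    calc (α+3) * Real.log n = δ * ((2*α+6) * p⁻¹ * (n:ℝ) * Real.log n) := hid.symm
      _ ≤ δ * T := mul_le_mul_of_nonneg_left hceil hδpos.le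
  calc (1-δ)^T * Epi.W n 1
      ≤ Real.exp (-(δ*T)) * Real.exp (2*(Real.log n + 1)) := by
        apply mul_le_mul ?_ (Epi.W1_le hn) (le_of_lt (Epi.W_pos n 1))
          (le_of_lt (Real.exp_pos _))
        have h1 : (1-δ) ≤ Real.exp (-δ) := by
          have := Real.add_one_le_exp (-δ)
          linarith
        calc (1-δ)^T ≤ (Real.exp (-δ))^T := pow_le_pow_left₀ hβpos.le h1 T
          _ = Real.exp (-(δ*T)) := by
            rw [← Real.exp_nat_mul]
            congr 1
            ring
    _ = Real.exp (2*Real.log n + 2 - δ*T) := by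
        rw [← Real.exp_add]
        congr 1
        ring
    _ ≤ Real.exp (2 - α * Real.log n) := by
        apply Real.exp_le_exp.mpr
        have hexp : (α+3) * Real.log n = α * Real.log n + 3 * Real.log n := by ring
        rw [hexp] at hTge
        linarith
    _ = Real.exp 2 * (n:ℝ)^(-α) := by
        rw [Real.rpow_def_of_pos hnpos, ← Real.exp_add]
        congr 1
        ring
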